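/- Let μ be a non-atomic Borel probability measure on a locally convex Hausdorff space E whose support K is compact and metrizable, and let g : [0,1] → E be a continuous map with K ⊆ g([0,1]). Then there exists a non-atomic Borel probability measure ρ on [0,1] whose pushforward under g equals μ. -/

import Mathlib

open MeasureTheory Set

theorem stmt8 {E : Type*} [AddCommGroup E] [Module ℝ E] [TopologicalSpace E]
    [IsTopologicalAddGroup E] [ContinuousSMul ℝ E] [LocallyConvexSpace ℝ E] [T2Space E]
    [MeasurableSpace E] [BorelSpace E]
    (μ : Measure E) [IsProbabilityMeasure μ] (hna : ∀ x : E, μ {x} = 0)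
    (K : Set E) (hK : IsCompact K) (hKm : TopologicalSpace.MetrizableSpace K)
    (hconc : μ Kᶜ = 0)
    (hfull : ∀ U : Set E, IsOpen U → (U ∩ K).Nonempty → 0 < μ U)
    (g : Icc (0:ℝ) 1 → E) (hg : Continuous g) (hKg : K ⊆ range g) :
    ∃ ρ : Measure (Icc (0:ℝ) 1), IsProbabilityMeasure ρ ∧
      (∀ t, ρ {t} = 0) ∧ ρ.map g = μ := by
  classical
  have hKclosed : IsClosed K := hK.isClosed
  have hKmeas : MeasurableSet K := hKclosed.measurableSet
  -- fibers of g over points of K, as subsets of ℝ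
  set S : E → Set ℝ := fun x => Subtype.val '' {t : Icc (0:ℝ) 1 | g t = x} with hS
  have hS_sub : ∀ x, S x ⊆ Icc (0:ℝ) 1 := by
    rintro x t ⟨u, _, rfl⟩; exact u.2
  have hS_compact : ∀ x, IsCompact (S x) := fun x =>
    ((isClosed_singleton.preimage hg).isCompact).image continuous_subtype_val
  have hS_ne : ∀ x ∈ K, (S x).Nonempty := by
    intro x hx
    obtain ⟨t, ht⟩ := hKg hx
    exact ⟨t.1, t, ht, rfl⟩
  -- the section: least element of the fiber
  have hleast : ∀ x ∈ K, IsLeast (S x) (sInf (S x)) := fun x hx =>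
    (hS_compact x).isLeast_sInf (hS_ne x hx)
  set τ : K → ℝ := fun x => sInf (S x.1) with hτ
  have hτ_mem : ∀ x : K, τ x ∈ Icc (0:ℝ) 1 := fun x =>
    hS_sub x.1 (hleast x.1 x.2).1
  set s : K → Icc (0:ℝ) 1 := fun x => ⟨τ x, hτ_mem x⟩ with hs
  have hgs : ∀ x : K, g (s x) = x.1 := by
    intro x
    obtain ⟨u, hu, huv⟩ := (hleast x.1 x.2).1
    have : s x = u := Subtype.ext huv.symm
    rw [this]; exact hu
  -- measurability of the section
  have hτ_meas : Measurable τ := by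
    apply measurable_of_Iic
    intro a
    have key : τ ⁻¹' Iic a = Subtype.val ⁻¹' (g '' {t : Icc (0:ℝ) 1 | (t : ℝ) ≤ a}) := by
      ext x
      simp only [mem_preimage, mem_Iic, mem_image, mem_setOf_eq]
      constructor
      · intro h
        obtain ⟨u, hu, huv⟩ := (hleast x.1 x.2).1
        exact ⟨u, by rw [huv]; exact h, hu⟩
      · rintro ⟨u, hua, hu⟩
        exact le_trans ((hleast x.1 x.2).2 ⟨u, hu, rfl⟩) hua
    rw [key]
    have hcl : IsClosed {t : Icc (0:ℝ) 1 | (t : ℝ) ≤ a} :=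
      isClosed_Iic.preimage continuous_subtype_val
    have : IsCompact (g '' {t : Icc (0:ℝ) 1 | (t : ℝ) ≤ a}) :=
      (hcl.isCompact).image hg
    exact this.isClosed.measurableSet.preimage measurable_subtype_coe
  have hs_meas : Measurable s := hτ_meas.subtype_mk
  -- the measure
  set ν : Measure K := μ.comap Subtype.val with hν
  have hval_meas : Measurable (Subtype.val : K → E) := measurable_subtype_coe
  have hemb : MeasurableEmbedding (Subtype.val : K → E) :=
    MeasurableEmbedding.subtype_coe hKmeas
  have hν_apply : ∀ A : Set K, MeasurableSet A → ν A = μ (Subtype.val '' A) := by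
    intro A hA
    exact Measure.comap_apply _ Subtype.val_injective
      (fun t ht => hemb.measurableSet_image' ht) _ hA
  have hμK : μ K = 1 := by
    have := measure_add_measure_compl (μ := μ) hKmeas
    rw [hconc, add_zero] at this
    simpa using this
  refine ⟨ν.map s, ?_, ?_, ?_⟩
  · constructor
    rw [Measure.map_apply hs_meas MeasurableSet.univ]
    simp only [preimage_univ]
    rw [hν_apply univ MeasurableSet.univ]
    simpa using hμK
  · intro t
    rw [Measure.map_apply hs_meas (measurableSet_singleton t)]
    have hsub : s ⁻¹' {t} ⊆ Subtype.val ⁻¹' {g t} := by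
      intro x hx
      have : s x = t := hx
      have : g t = x.1 := by rw [← this]; exact hgs x
      simp [this.symm]
    refine le_antisymm ?_ zero_le
    calc ν (s ⁻¹' {t}) ≤ ν (Subtype.val ⁻¹' {g t}) := measure_mono hsub
      _ = μ (Subtype.val '' (Subtype.val ⁻¹' {g t})) :=
          hν_apply _ (hval_meas (measurableSet_singleton _))
      _ ≤ μ {g t} := measure_mono (image_preimage_subset _ _)
      _ = 0 := hna _
  · rw [Measure.map_map hg.measurable hs_meas]
    have hcomp : g ∘ s = (Subtype.val : K → E) := funext hgs
    rw [hcomp]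
    ext A hA
    rw [Measure.map_apply hval_meas hA, hν_apply _ (hval_meas hA),
      Subtype.image_preimage_coe]
    have h1 : μ (A \ K) = 0 :=
      measure_mono_null (diff_subset_compl A K) hconc
    have := measure_inter_add_diff (μ := μ) A hKmeas
    rw [h1, add_zero] at this
    rw [inter_comm] at this
    exact this
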